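/- Let F : ℝⁿ → ℝⁿ be continuously differentiable with Jacobian J(x), satisfying Assumption 1 (‖J(x) − J(x*)‖_F ≤ M‖x − x*‖ for all x) and Assumption 2 (F(x*) = 0 and J* := J(x*) invertible). Let B ∈ ℝ^{n×n}, and set c := ‖J*⁻¹‖, σ := ‖B − J*‖_F, r := ‖x − x*‖. If c(σ + M r) < 1, then B is invertible and the quasi-Newton step x' = x − B⁻¹ F(x) satisfies ‖x' − x*‖ ≤ ((3 c M r / 2 + c σ) / (1 − c(σ + M r))) · r. -/

import Mathlib

open Matrix MeasureTheory ProbabilityTheory Finset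

/-- Euclidean norm of a vector in ℝⁿ. -/
noncomputable def enorm' {n : ℕ} (v : Fin n → ℝ) : ℝ := Real.sqrt (∑ i, (v i) ^ 2)

/-- Frobenius norm of a real n×n matrix. -/
noncomputable def frob {n : ℕ} (A : Matrix (Fin n) (Fin n) ℝ) : ℝ :=
  Real.sqrt (∑ i, ∑ j, (A i j) ^ 2)

/-- Spectral (ℓ₂ operator) norm of a real n×n matrix. -/
noncomputable def opNorm' {n : ℕ} (A : Matrix (Fin n) (Fin n) ℝ) : ℝ :=
  ‖Matrix.toEuclideanCLM (𝕜 := ℝ) A‖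

/-- The AAA update: AAA(B,J,s) = B + ((J−B) s sᵀ (J−B)ᵀ / (sᵀ(J−B)ᵀ(J−B)s)) (J−B)
if (J−B)s ≠ 0, and B otherwise. -/
noncomputable def AAAupd {n : ℕ} (B J : Matrix (Fin n) (Fin n) ℝ) (s : Fin n → ℝ) :
    Matrix (Fin n) (Fin n) ℝ :=
  if (J - B).mulVec s = 0 then B
  else B + (((J - B).mulVec s) ⬝ᵥ ((J - B).mulVec s))⁻¹ •
      (Matrix.vecMulVec ((J - B).mulVec s) ((J - B).mulVec s) * (J - B))

/-- `s` is a standard basis vector maximizing ‖R e_i‖ over the standard basis. -/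
noncomputable def IsGreedy {n : ℕ} (R : Matrix (Fin n) (Fin n) ℝ) (s : Fin n → ℝ) : Prop :=
  ∃ i : Fin n, s = Pi.single i 1 ∧
    ∀ j : Fin n, enorm' (R.mulVec (Pi.single j 1)) ≤ enorm' (R.mulVec (Pi.single i 1))

/-- `P` is the orthogonal-projection matrix onto the subspace `V` of ℝⁿ
(symmetric, idempotent, range `V`, identity on `V`). -/
def IsOrthProj {n : ℕ} (P : Matrix (Fin n) (Fin n) ℝ) (V : Submodule ℝ (Fin n → ℝ)) : Prop :=
  P.IsSymm ∧ P * P = P ∧ (∀ v, P.mulVec v ∈ V) ∧ (∀ v ∈ V, P.mulVec v = v)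

/-- Standard Gaussian measure on ℝⁿ: the n-fold product of N(0,1). -/
noncomputable def stdGaussianPi (n : ℕ) : MeasureTheory.Measure (Fin n → ℝ) :=
  MeasureTheory.Measure.pi fun _ => ProbabilityTheory.gaussianReal 0 1

section helpers
open scoped Matrix.Norms.L2Operator
variable {n : ℕ}

lemma enorm'_eq (v : Fin n → ℝ) : enorm' v = ‖(WithLp.equiv 2 (Fin n → ℝ)).symm v‖ := by
  rw [EuclideanSpace.norm_eq]; simp [enorm', sq_abs]

lemma opNorm'_eq (A : Matrix (Fin n) (Fin n) ℝ) : opNorm' A = ‖A‖ :=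
  (Matrix.cstar_norm_def A).symm

lemma enorm'_nonneg (v : Fin n → ℝ) : 0 ≤ enorm' v := Real.sqrt_nonneg _

lemma frob_nonneg (A : Matrix (Fin n) (Fin n) ℝ) : 0 ≤ frob A := Real.sqrt_nonneg _

lemma enorm'_mulVec_le_frob (A : Matrix (Fin n) (Fin n) ℝ) (v : Fin n → ℝ) :
    enorm' (A.mulVec v) ≤ frob A * enorm' v := by
  unfold enorm' frob
  rw [← Real.sqrt_mul (by positivity)]
  apply Real.sqrt_le_sqrt
  rw [Finset.sum_mul]
  refine Finset.sum_le_sum fun i _ => ?_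
  have h := Finset.sum_mul_sq_le_sq_mul_sq Finset.univ (fun j => A i j) v
  simpa [Matrix.mulVec, dotProduct] using h

lemma enorm'_mulVec_le (A : Matrix (Fin n) (Fin n) ℝ) (v : Fin n → ℝ) :
    enorm' (A.mulVec v) ≤ ‖A‖ * enorm' v := by
  rw [enorm'_eq, enorm'_eq]
  exact A.l2_opNorm_mulVec ((WithLp.equiv 2 (Fin n → ℝ)).symm v)

lemma opNorm_le_frob (A : Matrix (Fin n) (Fin n) ℝ) : ‖A‖ ≤ frob A := by
  rw [Matrix.cstar_norm_def]
  apply ContinuousLinearMap.opNorm_le_bound _ (frob_nonneg A)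
  intro z
  have h1 : (Matrix.toEuclideanCLM (𝕜 := ℝ) A) z =
      (WithLp.equiv 2 (Fin n → ℝ)).symm (A.mulVec (WithLp.equiv 2 (Fin n → ℝ) z)) := rfl
  have h2 : ‖z‖ = enorm' (WithLp.equiv 2 (Fin n → ℝ) z) := by
    rw [enorm'_eq, Equiv.symm_apply_apply]
  rw [h1, ← enorm'_eq, h2]
  exact enorm'_mulVec_le_frob A _
end helpers

section mv
open scoped Matrix.Norms.L2Operator
variable {n : ℕ}

local notation "ψ" => PiLp.continuousLinearEquiv 2 ℝ (fun _ : Fin n => ℝ)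

lemma hasFDerivG (F : (Fin n → ℝ) → (Fin n → ℝ)) (Jac : (Fin n → ℝ) → Matrix (Fin n) (Fin n) ℝ)
    (hJacF : ∀ y, HasFDerivAt F ((Jac y).mulVecLin.toContinuousLinearMap) y)
    (xstar : Fin n → ℝ) (y : EuclideanSpace ℝ (Fin n)) :
    HasFDerivAt (fun w : EuclideanSpace ℝ (Fin n) =>
        (ψ).symm (F ((ψ) w) - (Jac xstar).mulVec ((ψ) w)))
      (Matrix.toEuclideanCLM (𝕜 := ℝ) (Jac ((ψ) y) - Jac xstar)) y := by
  have h3 : HasFDerivAt (fun z : Fin n → ℝ => (Jac xstar).mulVec z)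
      ((Jac xstar).mulVecLin.toContinuousLinearMap) ((ψ) y) :=
    ((Jac xstar).mulVecLin.toContinuousLinearMap).hasFDerivAt
  have h1 := (hJacF ((ψ) y)).sub h3
  have h4 := h1.comp y (ψ).hasFDerivAt
  have h5 := ((ψ).symm.hasFDerivAt (x := F ((ψ) y) - (Jac xstar).mulVec ((ψ) y))).comp y h4
  refine h5.congr_fderiv ?_
  symm
  ext1 z
  show (WithLp.equiv 2 (Fin n → ℝ)).symm ((Jac ((ψ) y) - Jac xstar).mulVec ((ψ) z)) = _
  simp only [ContinuousLinearMap.coe_comp', Function.comp_apply,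
    ContinuousLinearEquiv.coe_coe, ContinuousLinearMap.coe_sub', Pi.sub_apply,
    LinearMap.coe_toContinuousLinearMap', Matrix.mulVecLin_apply, Matrix.sub_mulVec]
  rfl
end mv

section more
open scoped Matrix.Norms.L2Operator
variable {n : ℕ}

lemma opNorm'_nonneg (A : Matrix (Fin n) (Fin n) ℝ) : 0 ≤ opNorm' A := norm_nonneg _

lemma opNorm'_mul_le (A B : Matrix (Fin n) (Fin n) ℝ) :
    opNorm' (A * B) ≤ opNorm' A * opNorm' B := by
  rw [opNorm'_eq, opNorm'_eq, opNorm'_eq]; exact norm_mul_le A B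

lemma opNorm'_le_frob (A : Matrix (Fin n) (Fin n) ℝ) : opNorm' A ≤ frob A := by
  rw [opNorm'_eq]; exact opNorm_le_frob A

lemma enorm'_mulVec_le' (A : Matrix (Fin n) (Fin n) ℝ) (v : Fin n → ℝ) :
    enorm' (A.mulVec v) ≤ opNorm' A * enorm' v := by
  rw [opNorm'_eq]; exact enorm'_mulVec_le A v

lemma isUnit_one_add_of_opNorm'_lt_one {A : Matrix (Fin n) (Fin n) ℝ} (h : opNorm' A < 1) :
    IsUnit (1 + A) := by
  have h' : ‖-A‖ < 1 := by rw [norm_neg, ← opNorm'_eq]; exact h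
  simpa [sub_neg_eq_add] using isUnit_one_sub_of_norm_lt_one h'

lemma opNorm'_sub_le (A B : Matrix (Fin n) (Fin n) ℝ) :
    opNorm' (A - B) ≤ opNorm' A + opNorm' B := by
  rw [opNorm'_eq, opNorm'_eq, opNorm'_eq]; exact norm_sub_le A B

lemma enorm'_sub_le (u v : Fin n → ℝ) : enorm' (u - v) ≤ enorm' u + enorm' v := by
  rw [enorm'_eq, enorm'_eq, enorm'_eq]
  exact norm_sub_le _ _

lemma enorm'_psi_symm (u : Fin n → ℝ) :
    ‖(PiLp.continuousLinearEquiv 2 ℝ (fun _ : Fin n => ℝ)).symm u‖ = enorm' u := by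
  rw [enorm'_eq]; rfl

lemma meanvalue (F : (Fin n → ℝ) → (Fin n → ℝ)) (Jac : (Fin n → ℝ) → Matrix (Fin n) (Fin n) ℝ)
    (hJacF : ∀ y, HasFDerivAt F ((Jac y).mulVecLin.toContinuousLinearMap) y)
    (xstar x : Fin n → ℝ) (M : ℝ) (hM : 0 ≤ M)
    (hLip : ∀ y, frob (Jac y - Jac xstar) ≤ M * enorm' (y - xstar)) :
    enorm' ((F x - F xstar) - (Jac xstar).mulVec (x - xstar)) ≤
      M * enorm' (x - xstar) * enorm' (x - xstar) := by
  set ψ := PiLp.continuousLinearEquiv 2 ℝ (fun _ : Fin n => ℝ) with hψ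
  set a := ψ.symm xstar with ha
  set b := ψ.symm x with hb
  have hψa : (ψ) a = xstar := ψ.apply_symm_apply xstar
  have hψb : (ψ) b = x := ψ.apply_symm_apply x
  have hba : ‖b - a‖ = enorm' (x - xstar) := by
    rw [← map_sub]; exact enorm'_psi_symm _
  have hsegnorm : ∀ y ∈ segment ℝ a b, ‖y - a‖ ≤ ‖b - a‖ := by
    rintro y ⟨s, t, hs, ht, hst, rfl⟩
    have hs' : s = 1 - t := by linarith
    have h1 : s • a + t • b - a = t • (b - a) := by
      rw [hs']; module
    rw [h1, norm_smul, Real.norm_eq_abs, abs_of_nonneg ht]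
    nlinarith [norm_nonneg (b - a)]
  have bound : ∀ y ∈ segment ℝ a b,
      ‖Matrix.toEuclideanCLM (𝕜 := ℝ) (Jac ((ψ) y) - Jac xstar)‖ ≤ M * enorm' (x - xstar) := by
    intro y hy
    have h1 : opNorm' (Jac ((ψ) y) - Jac xstar) ≤ M * enorm' ((ψ) y - xstar) :=
      (opNorm'_le_frob _).trans (hLip _)
    have h2 : enorm' ((ψ) y - xstar) ≤ enorm' (x - xstar) := by
      have : (ψ) y - xstar = (ψ) (y - a) := by rw [map_sub, hψa]
      rw [this, ← hba]
      have : enorm' ((ψ) (y - a)) = ‖y - a‖ := by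
        rw [enorm'_eq]; rfl
      rw [this]
      exact hsegnorm y hy
    exact h1.trans (by nlinarith)
  have hmvt := (convex_segment a b).norm_image_sub_le_of_norm_hasFDerivWithin_le
    (f := fun w : EuclideanSpace ℝ (Fin n) =>
      ψ.symm (F ((ψ) w) - (Jac xstar).mulVec ((ψ) w)))
    (f' := fun y => Matrix.toEuclideanCLM (𝕜 := ℝ) (Jac ((ψ) y) - Jac xstar))
    (C := M * enorm' (x - xstar))
    (fun y _ => (hasFDerivG F Jac hJacF xstar y).hasFDerivWithinAt)
    bound (left_mem_segment ℝ a b) (right_mem_segment ℝ a b)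
  simp only [hψa, hψb] at hmvt
  have key : ψ.symm (F x - (Jac xstar).mulVec x) - ψ.symm (F xstar - (Jac xstar).mulVec xstar)
      = ψ.symm ((F x - F xstar) - (Jac xstar).mulVec (x - xstar)) := by
    rw [← map_sub]
    congr 1
    rw [Matrix.mulVec_sub]
    abel
  rw [key, enorm'_psi_symm, hba] at hmvt
  exact hmvt
end more

theorem stmt_13 {n : ℕ} (hn : 0 < n)
    (F : (Fin n → ℝ) → (Fin n → ℝ)) (Jac : (Fin n → ℝ) → Matrix (Fin n) (Fin n) ℝ)
    (hF : ContDiff ℝ 1 F)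
    (hJacF : ∀ y, HasFDerivAt F ((Jac y).mulVecLin.toContinuousLinearMap) y)
    (xstar : Fin n → ℝ) (M : ℝ) (hM : 0 < M)
    (hLip : ∀ y, frob (Jac y - Jac xstar) ≤ M * enorm' (y - xstar))
    (hFstar : F xstar = 0) (hJstar : IsUnit (Jac xstar))
    (B : Matrix (Fin n) (Fin n) ℝ) (x : Fin n → ℝ)
    (c σ r : ℝ)
    (hc : c = opNorm' ((Jac xstar)⁻¹))
    (hσ : σ = frob (B - Jac xstar))
    (hr : r = enorm' (x - xstar))
    (hlt : c * (σ + M * r) < 1) :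
    IsUnit B ∧
    enorm' ((x - B⁻¹.mulVec (F x)) - xstar) ≤
      (3 * c * M * r / 2 + c * σ) / (1 - c * (σ + M * r)) * r := by
  have hr0 : 0 ≤ r := by rw [hr]; exact enorm'_nonneg _
  have hσ0 : 0 ≤ σ := by rw [hσ]; exact frob_nonneg _
  have hc0 : 0 ≤ c := by rw [hc]; exact opNorm'_nonneg _
  have hcMr : 0 ≤ c * (M * r) := by positivity
  have hcσ_lt : c * σ < 1 := by nlinarith
  set K := (Jac xstar)⁻¹ with hK
  set Jm := Jac xstar with hJm
  have hdet : IsUnit Jm.det := (Matrix.isUnit_iff_isUnit_det _).mp hJstar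
  have hJK : Jm * K = 1 := Matrix.mul_nonsing_inv _ hdet
  have hKJ : K * Jm = 1 := Matrix.nonsing_inv_mul _ hdet
  have hEfr : opNorm' (B - Jm) ≤ σ := by rw [hσ]; exact opNorm'_le_frob _
  have hKE : opNorm' (K * (B - Jm)) ≤ c * σ := by
    refine (opNorm'_mul_le _ _).trans ?_
    rw [hc]
    exact mul_le_mul_of_nonneg_left hEfr (opNorm'_nonneg _)
  have hUnit1 : IsUnit (1 + K * (B - Jm)) :=
    isUnit_one_add_of_opNorm'_lt_one (lt_of_le_of_lt hKE hcσ_lt)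
  have hBfact : B = Jm * (1 + K * (B - Jm)) := by
    rw [mul_add, mul_one, ← mul_assoc, hJK, one_mul, add_sub_cancel]
  have hB : IsUnit B := hBfact ▸ hJstar.mul hUnit1
  refine ⟨hB, ?_⟩
  have hdetB : IsUnit B.det := (Matrix.isUnit_iff_isUnit_det _).mp hB
  have hBB : B * B⁻¹ = 1 := Matrix.mul_nonsing_inv _ hdetB
  have hB'B : B⁻¹ * B = 1 := Matrix.nonsing_inv_mul _ hdetB
  have hKB : K * B = 1 + K * (B - Jm) := by
    conv_lhs => rw [hBfact]
    rw [← mul_assoc, hKJ, one_mul]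
  have hid : B⁻¹ = K - K * (B - Jm) * B⁻¹ := by
    calc B⁻¹ = (1 + K * (B - Jm)) * B⁻¹ - K * (B - Jm) * B⁻¹ := by
          rw [add_mul, one_mul, add_sub_cancel_right]
      _ = K - K * (B - Jm) * B⁻¹ := by rw [← hKB, mul_assoc, hBB, mul_one]
  have hβ : opNorm' B⁻¹ ≤ c + c * σ * opNorm' B⁻¹ := by
    calc opNorm' B⁻¹ = opNorm' (K - K * (B - Jm) * B⁻¹) := by rw [← hid]
      _ ≤ opNorm' K + opNorm' (K * (B - Jm) * B⁻¹) := opNorm'_sub_le _ _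
      _ ≤ c + c * σ * opNorm' B⁻¹ := by
          refine add_le_add (le_of_eq hc.symm) ?_
          refine (opNorm'_mul_le _ _).trans ?_
          exact mul_le_mul_of_nonneg_right hKE (opNorm'_nonneg _)
  have hD' : 0 < 1 - c * σ := by linarith
  have hD : 0 < 1 - c * (σ + M * r) := by linarith
  have hBinv : opNorm' B⁻¹ ≤ c / (1 - c * σ) := by
    rw [le_div_iff₀ hD']
    nlinarith [hβ, opNorm'_nonneg B⁻¹]
  have hmv := meanvalue F Jac hJacF xstar x M hM.le hLip
  rw [hFstar, sub_zero, ← hr] at hmv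
  have hT : (x - B⁻¹.mulVec (F x)) - xstar
      = B⁻¹.mulVec ((B - Jm).mulVec (x - xstar) - (F x - Jm.mulVec (x - xstar))) := by
    have h1 : (B - Jm).mulVec (x - xstar) - (F x - Jm.mulVec (x - xstar))
        = B.mulVec (x - xstar) - F x := by
      rw [Matrix.sub_mulVec]; abel
    rw [h1, Matrix.mulVec_sub, Matrix.mulVec_mulVec, hB'B, Matrix.one_mulVec]
    abel
  have hchain : enorm' ((x - B⁻¹.mulVec (F x)) - xstar)
      ≤ (c / (1 - c * σ)) * (σ * r + M * r * r) := by
    rw [hT]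
    calc enorm' (B⁻¹.mulVec ((B - Jm).mulVec (x - xstar) - (F x - Jm.mulVec (x - xstar))))
        ≤ opNorm' B⁻¹ * enorm' ((B - Jm).mulVec (x - xstar) - (F x - Jm.mulVec (x - xstar))) :=
          enorm'_mulVec_le' _ _
      _ ≤ opNorm' B⁻¹ * (σ * r + M * r * r) := by
          refine mul_le_mul_of_nonneg_left ?_ (opNorm'_nonneg _)
          refine (enorm'_sub_le _ _).trans (add_le_add ?_ hmv)
          refine (enorm'_mulVec_le' _ _).trans ?_
          rw [hr]
          exact mul_le_mul_of_nonneg_right hEfr (enorm'_nonneg _)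
      _ ≤ (c / (1 - c * σ)) * (σ * r + M * r * r) := by
          refine mul_le_mul_of_nonneg_right hBinv (by positivity)
  refine hchain.trans ?_
  rw [div_mul_eq_mul_div, div_mul_eq_mul_div, div_le_div_iff₀ hD' hD]
  nlinarith [mul_nonneg (mul_nonneg (mul_nonneg hc0 hM.le) (mul_nonneg hr0 hr0)) hD.le,
    mul_nonneg (add_nonneg (mul_nonneg (mul_nonneg hc0 hσ0) hr0)
      (mul_nonneg (mul_nonneg (mul_nonneg hc0 hM.le) hr0) hr0))
      (mul_nonneg (mul_nonneg hc0 hM.le) hr0),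
    mul_nonneg hr0 hr0, mul_nonneg hc0 hσ0]
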